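/- Let {φ_k}_{k≥0} and {ψ_m}_{m≥0} be asymptotic scales on a domain D with respect to a common limit L (i.e. φ_{k+1} = o(φ_k) and ψ_{m+1} = o(ψ_m)). Suppose f has an asymptotic expansion f ∼ Σ_k c_k φ_k, and each ψ_m has an asymptotic expansion ψ_m ∼ Σ_{k≥m} c_{m,k} φ_k with c_{m,m} ≠ 0. Then f has an asymptotic expansion f ∼ Σ_m c'_m ψ_m, where the coefficients c'_m are determined by the triangular system c_k = Σ_{m=0}^{k} c'_m c_{m,k} for all k ≥ 0. -/

import Mathlib

open Asymptotics Filter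

/-- Change of asymptotic scale: if `f ∼ Σ c_k φ_k`, each `ψ_m ∼ Σ_{k≥m} c_{m,k} φ_k`
with `c_{m,m} ≠ 0`, and `c'_m` solves the triangular system
`c_k = Σ_{m≤k} c'_m c_{m,k}`, then `f ∼ Σ c'_m ψ_m`. -/
theorem stmt_10 {α : Type*} (l : Filter α) (φ ψ : ℕ → α → ℝ)
    (hφ : ∀ k, (φ (k + 1)) =o[l] (φ k))
    (hψ : ∀ m, (ψ (m + 1)) =o[l] (ψ m))
    (f : α → ℝ) (c : ℕ → ℝ)
    (hf : ∀ R : ℕ, (fun x => f x - ∑ k ∈ Finset.range R, c k * φ k x) =O[l] (φ R))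
    (cmk : ℕ → ℕ → ℝ)
    (hlow : ∀ m k, k < m → cmk m k = 0)
    (hψexp : ∀ m R : ℕ,
      (fun x => ψ m x - ∑ k ∈ Finset.range R, cmk m k * φ k x) =O[l] (φ R))
    (hdiag : ∀ m, cmk m m ≠ 0)
    (c' : ℕ → ℝ)
    (hc' : ∀ k, c k = ∑ m ∈ Finset.range (k + 1), c' m * cmk m k) :
    ∀ R : ℕ, (fun x => f x - ∑ m ∈ Finset.range R, c' m * ψ m x) =O[l] (ψ R) := by
  -- Step 1: φ R = O(ψ R)
  have key : ∀ R, (φ R) =O[l] (ψ R) := by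
    intro R
    have hsum : ∀ x, ∑ k ∈ Finset.range (R + 1), cmk R k * φ k x = cmk R R * φ R x := by
      intro x
      rw [Finset.sum_range_succ, Finset.sum_eq_zero, zero_add]
      intro k hk
      rw [hlow R k (Finset.mem_range.mp hk), zero_mul]
    have h2 : (fun x => ψ R x - cmk R R * φ R x) =o[l] (φ R) := by
      have := (hψexp R (R + 1)).trans_isLittleO (hφ R)
      simpa only [hsum] using this
    have h3 : (fun x => cmk R R * φ R x) =O[l] (ψ R) := by
      have h2' : (fun x => ψ R x - cmk R R * φ R x) =o[l] (fun x => cmk R R * φ R x) :=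
        h2.trans_isBigO (isBigO_self_const_mul (hdiag R) (φ R) l)
      have h4 := h2'.right_isBigO_add
      have heq : (fun x => ψ R x - cmk R R * φ R x + cmk R R * φ R x) = ψ R := by
        funext x; ring
      rwa [heq] at h4
    exact (isBigO_self_const_mul (hdiag R) (φ R) l).trans h3
  intro R
  have heq : (fun x => f x - ∑ m ∈ Finset.range R, c' m * ψ m x)
      = fun x => (f x - ∑ k ∈ Finset.range R, c k * φ k x)
        - ∑ m ∈ Finset.range R,
            c' m * (ψ m x - ∑ k ∈ Finset.range R, cmk m k * φ k x) := by
    funext x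
    have hswap : ∑ m ∈ Finset.range R, c' m * ∑ k ∈ Finset.range R, cmk m k * φ k x
        = ∑ k ∈ Finset.range R, (∑ m ∈ Finset.range R, c' m * cmk m k) * φ k x := by
      simp only [Finset.mul_sum, Finset.sum_mul]
      rw [Finset.sum_comm]
      simp [mul_assoc]
    have hcoef : ∀ k ∈ Finset.range R, (∑ m ∈ Finset.range R, c' m * cmk m k) * φ k x
        = c k * φ k x := by
      intro k hk
      congr 1
      rw [hc' k]
      symm
      apply Finset.sum_subset
      · exact Finset.range_subset_range.mpr (Finset.mem_range.mp hk)
      · intro m _ hm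
        have hkm : k < m := by
          by_contra h
          exact hm (Finset.mem_range.mpr (by omega))
        rw [hlow m k hkm, mul_zero]
    simp only [mul_sub, Finset.sum_sub_distrib]
    rw [hswap, Finset.sum_congr rfl hcoef]
    ring
  rw [heq]
  have hsumO : (fun x => ∑ m ∈ Finset.range R,
      c' m * (ψ m x - ∑ k ∈ Finset.range R, cmk m k * φ k x)) =O[l] (φ R) := by
    apply IsBigO.fun_sum
    intro m _
    exact ((hψexp m R).const_mul_left (c' m))
  exact ((hf R).sub hsumO).trans (key R)
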